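/- Let A, B ∈ ℝ^{n×n}, γ > 0, and let P ∈ ℝ^{n×n} be symmetric positive definite satisfying the parametric algebraic Riccati equation AᵀP + PA − P·B·Bᵀ·P = −γP. If every eigenvalue of A is purely imaginary, then P·B·Bᵀ·P ≤ nγ·P in the Loewner order, i.e., nγ·P − P·B·Bᵀ·P is positive semidefinite. -/

import Mathlib

open Matrix Polynomial

/-- Cauchy–Schwarz: `‖R y‖² ≤ tr(Rᵀ R) ‖y‖²`. -/
lemma cs_aux {n : ℕ} (R : Matrix (Fin n) (Fin n) ℝ) (y : Fin n → ℝ) :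
    (R *ᵥ y) ⬝ᵥ (R *ᵥ y) ≤ (Rᵀ * R).trace * (y ⬝ᵥ y) := by
  have hL : (R *ᵥ y) ⬝ᵥ (R *ᵥ y) = ∑ i, (∑ j, R i j * y j) ^ 2 := by
    simp [dotProduct, mulVec, sq]
  have hT : (Rᵀ * R).trace = ∑ i, ∑ j, R j i ^ 2 := by
    simp [Matrix.trace, Matrix.mul_apply, Matrix.diag, sq]
  have hy : y ⬝ᵥ y = ∑ j, y j ^ 2 := by simp [dotProduct, sq]
  rw [hL, hT, hy]
  calc ∑ i, (∑ j, R i j * y j) ^ 2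
      ≤ ∑ i, (∑ j, R i j ^ 2) * (∑ j, y j ^ 2) :=
        Finset.sum_le_sum fun i _ => Finset.sum_mul_sq_le_sq_mul_sq _ _ _
    _ = (∑ i, ∑ j, R i j ^ 2) * (∑ j, y j ^ 2) := (Finset.sum_mul _ _ _).symm
    _ = (∑ i, ∑ j, R j i ^ 2) * (∑ j, y j ^ 2) := by rw [Finset.sum_comm]

lemma trace_zero_of_im {n : ℕ} (A : Matrix (Fin n) (Fin n) ℝ)
    (him : ∀ μ ∈ spectrum ℂ (A.map Complex.ofReal), μ.re = 0) : A.trace = 0 := by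
  set A' : Matrix (Fin n) (Fin n) ℂ := A.map Complex.ofReal with hA'
  have hroot : ∀ μ ∈ A'.charpoly.roots, μ ∈ spectrum ℂ A' := by
    intro μ hμ
    have hev : A'.charpoly.eval μ = 0 := Polynomial.isRoot_of_mem_roots hμ
    have hmap : (RingHom.mapMatrix (Polynomial.evalRingHom μ)) (charmatrix A')
        = algebraMap ℂ (Matrix (Fin n) (Fin n) ℂ) μ - A' := by
      ext i j
      by_cases h : i = j <;>
        simp [charmatrix_apply, Matrix.algebraMap_matrix_apply,
          Matrix.diagonal_apply, h, Matrix.sub_apply]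
    have hdet : (algebraMap ℂ (Matrix (Fin n) (Fin n) ℂ) μ - A').det = 0 := by
      have h := RingHom.map_det (Polynomial.evalRingHom μ) (charmatrix A')
      rw [hmap] at h
      rw [← h]
      simpa [Matrix.charpoly] using hev
    rw [spectrum.mem_iff]
    intro hu
    rw [Matrix.isUnit_iff_isUnit_det, hdet] at hu
    simp at hu
  have h2 : (A'.trace).re = 0 := by
    rw [A'.trace_eq_sum_roots_charpoly]
    rw [show (A'.charpoly.roots.sum).re = (A'.charpoly.roots.map Complex.re).sum from
      map_multiset_sum Complex.reAddGroupHom _]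
    refine Multiset.sum_eq_zero ?_
    intro x hx
    obtain ⟨μ, hμ, rfl⟩ := Multiset.mem_map.mp hx
    exact him μ (hroot μ hμ)
  have h3 : A'.trace = (A.trace : ℂ) := by
    simp [Matrix.trace, hA', Matrix.map_apply, Matrix.diag]
  rw [h3] at h2
  simpa using h2

/-- If `P > 0` solves the parametric ARE `AᵀP + PA - PBBᵀP = -γP` and all
eigenvalues of `A` are purely imaginary, then `PBBᵀP ≤ nγ·P` in the Loewner
order, i.e. `nγ·P - PBBᵀP` is positive semidefinite. -/
theorem stmt14 {n : ℕ}
    (A B P : Matrix (Fin n) (Fin n) ℝ) (γ : ℝ) (hγ : 0 < γ)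
    (hPsym : P.IsSymm) (hP : P.PosDef)
    (hare : Aᵀ * P + P * A - P * B * Bᵀ * P = -γ • P)
    (him : ∀ μ ∈ spectrum ℂ (A.map Complex.ofReal), μ.re = 0) :
    (((n : ℝ) * γ) • P - P * B * Bᵀ * P).PosSemidef := by
  have hPt : Pᵀ = P := hPsym
  have hMeq : P * B * Bᵀ * P = γ • P + (Aᵀ * P + P * A) := by
    have h := sub_eq_iff_eq_add.mp hare
    rw [h, neg_smul, ← add_assoc, add_neg_cancel, zero_add]
  have hPdet : IsUnit P.det := hP.det_pos.ne'.isUnit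
  open MatrixOrder in
  set S := CFC.sqrt P with hSdef
  open MatrixOrder in
  have hSS : S * S = P := CFC.sqrt_mul_sqrt_self P hP.posSemidef.nonneg
  have hSt : Sᵀ = S := by
    open MatrixOrder in
    have := (CFC.sqrt_nonneg P).posSemidef.isHermitian
    rwa [Matrix.IsHermitian, conjTranspose_eq_transpose_of_trivial] at this
  have hSdet : IsUnit S.det := by
    have hm : S.det * S.det = P.det := by rw [← det_mul, hSS]
    have h0 : S.det ≠ 0 := by
      intro h
      rw [h, mul_zero] at hm
      exact hP.det_pos.ne' hm.symm
    exact h0.isUnit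
  have hSinv : S⁻¹ * S = 1 := nonsing_inv_mul S hSdet
  have hSinvt : (S⁻¹)ᵀ = S⁻¹ := by rw [transpose_nonsing_inv, hSt]
  set C := Bᵀ * P with hCdef
  set Rm := C * S⁻¹ with hRdef
  have hCR : Rm * S = C := by rw [hRdef, mul_assoc, hSinv, mul_one]
  have hCtC : Cᵀ * C = P * B * Bᵀ * P := by
    rw [hCdef, transpose_mul, transpose_transpose, hPt, mul_assoc, ← mul_assoc, ← mul_assoc]
  have htrA : A.trace = 0 := trace_zero_of_im A him
  -- trace computation
  have hSinv2 : S⁻¹ * S⁻¹ = P⁻¹ := by rw [← Matrix.mul_inv_rev, hSS]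
  have h1 : Rmᵀ * Rm = S⁻¹ * (Cᵀ * C) * S⁻¹ := by
    rw [hRdef, transpose_mul, hSinvt, hCdef]
    simp only [mul_assoc]
  have htr : (Rmᵀ * Rm).trace = (n : ℝ) * γ := by
    rw [h1, trace_mul_cycle, ← mul_assoc, hSinv2, mul_assoc, hCtC, hMeq, Matrix.mul_add,
      Matrix.mul_add, trace_add, trace_add]
    have e0 : (P⁻¹ * (γ • P)).trace = (n : ℝ) * γ := by
      rw [Matrix.mul_smul, trace_smul, nonsing_inv_mul P hPdet, trace_one]
      simp [mul_comm]
    have e1 : (P⁻¹ * (Aᵀ * P)).trace = (0 : ℝ) := by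
      rw [← mul_assoc, trace_mul_cycle, mul_nonsing_inv P hPdet, one_mul, trace_transpose, htrA]
    have e2 : (P⁻¹ * (P * A)).trace = (0 : ℝ) := by
      rw [← mul_assoc, nonsing_inv_mul P hPdet, one_mul, htrA]
    rw [e0, e1, e2, add_zero, add_zero]
  rw [posSemidef_iff_dotProduct_mulVec]
  constructor
  · -- Hermitian
    rw [Matrix.IsHermitian, conjTranspose_eq_transpose_of_trivial, transpose_sub,
      transpose_smul, hPt, ← hCtC, transpose_mul, transpose_transpose]
  · intro x
    have hstar : star x = x := by simp
    rw [hstar, Matrix.sub_mulVec, dotProduct_sub, Matrix.smul_mulVec,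
      dotProduct_smul]
    have hPx : x ⬝ᵥ (P *ᵥ x) = (S *ᵥ x) ⬝ᵥ (S *ᵥ x) := by
      rw [← hSS, ← Matrix.mulVec_mulVec, dotProduct_mulVec, ← hSt, vecMul_transpose, hSt]
    have hMx : x ⬝ᵥ ((P * B * Bᵀ * P) *ᵥ x) = (C *ᵥ x) ⬝ᵥ (C *ᵥ x) := by
      rw [← hCtC, ← Matrix.mulVec_mulVec, dotProduct_mulVec, vecMul_transpose]
    have hCx : C *ᵥ x = Rm *ᵥ (S *ᵥ x) := by
      rw [Matrix.mulVec_mulVec, hCR]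
    have key := cs_aux Rm (S *ᵥ x)
    rw [htr] at key
    rw [hMx, hCx, hPx]
    have : (S *ᵥ x) ⬝ᵥ (S *ᵥ x) = x ⬝ᵥ (P *ᵥ x) := hPx.symm
    rw [smul_eq_mul]
    linarith [key]
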